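/- arXiv:2210.03981 — 3 statements merged into one kernel-verified Lean document; each statement's English description precedes it below -/
import Mathlib

section
/- Let $\mathcal{M}(t)$ be the non-homogeneous generalized counting process with cumulative rate functions $\Lambda_j(t)=\int_0^t\lambda_j(u)\,du$, $1\le j\le k$, whose state probabilities satisfy $\frac{d}{dt}q_n(t) = -\sum_{j=1}^k\lambda_j(t)q_n(t) + \sum_{j=1}^{n\wedge k}\lambda_j(t)q_{n-j}(t)$ with $q_0(0)=1$, $q_n(0)=0$ for $n\ge1$. Then the functions $q_n(t)=\sum_{\Omega(k,n)}\prod_{j=1}^k\frac{(\Lambda_j(t))^{x_j}}{x_j!}e^{-\sum_{j=1}^k\Lambda_j(t)}$ solve this system. -/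
open scoped BigOperators

/-- The candidate pmf of the non-homogeneous GCP with cumulative rates `L j`:
`∑_{Ω(k,n)} ∏ (Lⱼ)^{xⱼ}/xⱼ! · exp(-∑ Lⱼ)`. -/
noncomputable def ngcpPmf (k : ℕ) (L : Fin k → ℝ) (n : ℕ) : ℝ :=
  ∑' x : Fin k → ℕ,
    if ∑ j, (j.1 + 1) * x j = n then
      (∏ j, L j ^ x j / (Nat.factorial (x j) : ℝ)) * Real.exp (-∑ j, L j)
    else 0

namespace NGCPaux

/-- The finite set `Ω(k,n)`. -/
def Om (k n : ℕ) : Finset (Fin k → ℕ) :=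
  (Fintype.piFinset fun _ => Finset.range (n+1)).filter (fun x => ∑ j, (j.1+1) * x j = n)

lemma le_of_sum_eq {k n : ℕ} {x : Fin k → ℕ} (h : ∑ j, (j.1+1) * x j = n) (i : Fin k) :
    x i ≤ n := by
  calc x i ≤ (i.1+1) * x i := Nat.le_mul_of_pos_left _ (Nat.succ_pos _)
    _ ≤ ∑ j, (j.1+1) * x j :=
        Finset.single_le_sum (f := fun j => (j.1+1) * x j) (fun j _ => Nat.zero_le _)
          (Finset.mem_univ i)
    _ = n := h

lemma mem_Om {k n : ℕ} {x : Fin k → ℕ} : x ∈ Om k n ↔ ∑ j, (j.1+1) * x j = n := by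
  constructor
  · intro h; exact (Finset.mem_filter.mp h).2
  · intro h
    refine Finset.mem_filter.mpr ⟨Fintype.mem_piFinset.mpr fun i => ?_, h⟩
    exact Finset.mem_range.mpr (Nat.lt_succ_of_le (le_of_sum_eq h i))

lemma ngcpPmf_eq (k : ℕ) (L : Fin k → ℝ) (n : ℕ) :
    ngcpPmf k L n =
      ∑ x ∈ Om k n, (∏ j, L j ^ x j / (Nat.factorial (x j) : ℝ)) * Real.exp (-∑ j, L j) := by
  rw [ngcpPmf, tsum_eq_sum (s := Om k n)]
  · exact Finset.sum_congr rfl fun x hx => if_pos (mem_Om.mp hx)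
  · intro x hx
    rw [if_neg]
    exact fun h => hx (mem_Om.mpr h)

lemma sum_split {k : ℕ} (x : Fin k → ℕ) (i : Fin k) :
    ∑ j, (j.1+1) * x j = (i.1+1) * x i + ∑ j ∈ Finset.univ.erase i, (j.1+1) * x j :=
  (Finset.add_sum_erase _ _ (Finset.mem_univ i)).symm

lemma sum_update {k : ℕ} (x : Fin k → ℕ) (i : Fin k) (b : ℕ) :
    ∑ j, (j.1+1) * Function.update x i b j
      = (i.1+1) * b + ∑ j ∈ Finset.univ.erase i, (j.1+1) * x j := by
  rw [sum_split (Function.update x i b) i, Function.update_self]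
  congr 1
  refine Finset.sum_congr rfl fun j hj => ?_
  rw [Function.update_of_ne (Finset.ne_of_mem_erase hj)]

/-- The key combinatorial identity for the `i`-th derivative term.  -/
lemma inner_sum (k n : ℕ) (i : Fin k) (L : Fin k → ℝ) (li : ℝ) :
    ∑ x ∈ Om k n,
        (∏ j ∈ Finset.univ.erase i, L j ^ x j / (Nat.factorial (x j) : ℝ)) *
          (((x i : ℝ) * L i ^ (x i - 1) * li) / (Nat.factorial (x i) : ℝ))
      = if i.1 + 1 ≤ n then
          li * ∑ y ∈ Om k (n - (i.1+1)), ∏ j, L j ^ y j / (Nat.factorial (y j) : ℝ)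
        else 0 := by
  by_cases hn : i.1 + 1 ≤ n
  · rw [if_pos hn, Finset.mul_sum]
    rw [← Finset.sum_filter_of_ne (p := fun x => x i ≠ 0)
        (fun x _ hx => by
          intro h0
          apply hx
          simp [h0])]
    refine Finset.sum_bij' (fun x _ => Function.update x i (x i - 1))
      (fun y _ => Function.update y i (y i + 1)) ?_ ?_ ?_ ?_ ?_
    · intro x hx
      obtain ⟨hxo, hxi⟩ := Finset.mem_filter.mp hx
      have hsum := mem_Om.mp hxo
      obtain ⟨m, hm⟩ := Nat.exists_eq_succ_of_ne_zero hxi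
      refine mem_Om.mpr ?_
      rw [sum_update]
      rw [sum_split x i, hm] at hsum
      rw [hm]
      simp only [Nat.succ_sub_one, Nat.mul_succ] at *
      omega
    · intro y hy
      have hsum := mem_Om.mp hy
      refine Finset.mem_filter.mpr ⟨mem_Om.mpr ?_, by simp⟩
      rw [sum_update]
      rw [sum_split y i] at hsum
      simp only [Nat.mul_succ] at *
      omega
    · intro x hx
      obtain ⟨_, hxi⟩ := Finset.mem_filter.mp hx
      simp only [Function.update_self, Function.update_idem]
      rw [Nat.sub_add_cancel (Nat.one_le_iff_ne_zero.mpr hxi), Function.update_eq_self]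
    · intro y hy
      simp only [Function.update_self, Function.update_idem, Nat.add_sub_cancel,
        Function.update_eq_self]
    · intro x hx
      obtain ⟨_, hxi⟩ := Finset.mem_filter.mp hx
      obtain ⟨m, hm⟩ := Nat.exists_eq_succ_of_ne_zero hxi
      rw [← Finset.mul_prod_erase _ _ (Finset.mem_univ i), Function.update_self]
      have hprod : ∏ j ∈ Finset.univ.erase i,
          L j ^ Function.update x i (x i - 1) j /
            (Nat.factorial (Function.update x i (x i - 1) j) : ℝ)
          = ∏ j ∈ Finset.univ.erase i, L j ^ x j / (Nat.factorial (x j) : ℝ) := by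
        refine Finset.prod_congr rfl fun j hj => ?_
        rw [Function.update_of_ne (Finset.ne_of_mem_erase hj)]
      rw [mul_comm (L i ^ (x i - 1) / _) _, hprod, hm]
      simp only [Nat.succ_sub_one]
      rw [Nat.factorial_succ]
      have hmf : (Nat.factorial m : ℝ) ≠ 0 := Nat.cast_ne_zero.mpr (Nat.factorial_ne_zero m)
      have hm1 : ((m : ℝ) + 1) ≠ 0 := by positivity
      push_cast
      field_simp
  · rw [if_neg hn]
    refine Finset.sum_eq_zero fun x hx => ?_
    have hsum := mem_Om.mp hx
    have hxi : x i = 0 := by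
      by_contra h0
      have h1 : i.1 + 1 ≤ (i.1+1) * x i := Nat.le_mul_of_pos_right _ (Nat.pos_of_ne_zero h0)
      have h2 : (i.1+1) * x i ≤ n := by
        rw [← hsum]
        exact Finset.single_le_sum (f := fun j => (j.1+1) * x j) (fun j _ => Nat.zero_le _)
          (Finset.mem_univ i)
      omega
    simp [hxi]

/-- Main algebraic identity: the derivative sum equals the RHS of the ODE. -/
lemma main_sum (k n : ℕ) (L l : Fin k → ℝ) :
    ∑ x ∈ Om k n,
      ((∑ i, (∏ j ∈ Finset.univ.erase i, L j ^ x j / (Nat.factorial (x j) : ℝ)) *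
          (((x i : ℝ) * L i ^ (x i - 1) * l i) / (Nat.factorial (x i) : ℝ))) *
        Real.exp (-∑ j, L j) +
        (∏ j, L j ^ x j / (Nat.factorial (x j) : ℝ)) *
          (Real.exp (-∑ j, L j) * (-∑ j, l j)))
      = -(∑ j, l j) * ngcpPmf k L n +
        ∑ i : Fin k, if i.1 + 1 ≤ n then l i * ngcpPmf k L (n - (i.1 + 1)) else 0 := by
  rw [Finset.sum_add_distrib, add_comm]
  congr 1
  · rw [ngcpPmf_eq, Finset.mul_sum]
    exact Finset.sum_congr rfl fun x _ => by ring
  · -- first part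
    have h1 : ∀ x ∈ Om k n,
        (∑ i, (∏ j ∈ Finset.univ.erase i, L j ^ x j / (Nat.factorial (x j) : ℝ)) *
          (((x i : ℝ) * L i ^ (x i - 1) * l i) / (Nat.factorial (x i) : ℝ))) *
          Real.exp (-∑ j, L j)
        = ∑ i, ((∏ j ∈ Finset.univ.erase i, L j ^ x j / (Nat.factorial (x j) : ℝ)) *
            (((x i : ℝ) * L i ^ (x i - 1) * l i) / (Nat.factorial (x i) : ℝ))) *
            Real.exp (-∑ j, L j) := fun x _ => Finset.sum_mul _ _ _
    rw [Finset.sum_congr rfl h1, Finset.sum_comm]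
    refine Finset.sum_congr rfl fun i _ => ?_
    rw [← Finset.sum_mul, inner_sum k n i L (l i)]
    by_cases hn : i.1 + 1 ≤ n
    · rw [if_pos hn, if_pos hn, ngcpPmf_eq, Finset.mul_sum, Finset.mul_sum, Finset.sum_mul]
      exact Finset.sum_congr rfl fun y _ => by ring
    · rw [if_neg hn, if_neg hn, zero_mul]

end NGCPaux

namespace NGCPaux

/-- Derivative of the candidate pmf along arbitrary differentiable cumulative rates. -/
lemma deriv_aux (k n : ℕ) (Λ lam : Fin k → ℝ → ℝ) (t : ℝ)
    (hΛ : ∀ j, HasDerivAt (Λ j) (lam j t) t) :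
    HasDerivAt (fun t : ℝ => ngcpPmf k (fun j => Λ j t) n)
      (-(∑ j, lam j t) * ngcpPmf k (fun j => Λ j t) n +
        ∑ i : Fin k, if i.1 + 1 ≤ n then
          lam i t * ngcpPmf k (fun j => Λ j t) (n - (i.1 + 1)) else 0) t := by
  have hfun : (fun t : ℝ => ngcpPmf k (fun j => Λ j t) n)
      = fun t : ℝ => ∑ x ∈ Om k n,
          (∏ j, Λ j t ^ x j / (Nat.factorial (x j) : ℝ)) * Real.exp (-∑ j, Λ j t) :=
    funext fun t => ngcpPmf_eq k _ n
  rw [hfun, show (-(∑ j, lam j t) * ngcpPmf k (fun j => Λ j t) n +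
        ∑ i : Fin k, if i.1 + 1 ≤ n then
          lam i t * ngcpPmf k (fun j => Λ j t) (n - (i.1 + 1)) else 0)
      = ∑ x ∈ Om k n,
        ((∑ i, (∏ j ∈ Finset.univ.erase i, Λ j t ^ x j / (Nat.factorial (x j) : ℝ)) *
            (((x i : ℝ) * Λ i t ^ (x i - 1) * lam i t) / (Nat.factorial (x i) : ℝ))) *
          Real.exp (-∑ j, Λ j t) +
          (∏ j, Λ j t ^ x j / (Nat.factorial (x j) : ℝ)) *
            (Real.exp (-∑ j, Λ j t) * (-∑ j, lam j t)))
    from (main_sum k n (fun j => Λ j t) (fun j => lam j t)).symm]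
  refine HasDerivAt.fun_sum fun x _ => ?_
  have hP : HasDerivAt (fun t => ∏ j, Λ j t ^ x j / (Nat.factorial (x j) : ℝ))
      (∑ i, (∏ j ∈ Finset.univ.erase i, Λ j t ^ x j / (Nat.factorial (x j) : ℝ)) •
        (((x i : ℝ) * Λ i t ^ (x i - 1) * lam i t) / (Nat.factorial (x i) : ℝ))) t :=
    HasDerivAt.fun_finset_prod fun i _ => ((hΛ i).pow (x i)).div_const _
  have hE : HasDerivAt (fun t => Real.exp (-∑ j, Λ j t))
      (Real.exp (-∑ j, Λ j t) * (-∑ j, lam j t)) t :=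
    ((HasDerivAt.fun_sum fun j _ => hΛ j).neg).exp
  simpa [smul_eq_mul] using hP.fun_mul hE

end NGCPaux

open NGCPaux in
/-- The functions `qₙ(t) = ∑_{Ω(k,n)} ∏ (Λⱼ(t))^{xⱼ}/xⱼ! e^{-∑ Λⱼ(t)}`, with
`Λⱼ(t) = ∫₀ᵗ λⱼ(u)du`, solve the NGCP system
`q'ₙ(t) = -∑ⱼ λⱼ(t) qₙ(t) + ∑_{j=1}^{n∧k} λⱼ(t) q_{n-j}(t)` with `q₀(0)=1`, `qₙ(0)=0` for `n≥1`. -/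
theorem ngcp_solves (k : ℕ) (lam : Fin k → ℝ → ℝ) (hcont : ∀ j, Continuous (lam j))
    (hpos : ∀ j t, 0 ≤ lam j t) :
    (∀ (n : ℕ) (t : ℝ),
      HasDerivAt (fun t : ℝ => ngcpPmf k (fun j => ∫ s in (0:ℝ)..t, lam j s) n)
        (-(∑ j, lam j t) * ngcpPmf k (fun j => ∫ s in (0:ℝ)..t, lam j s) n +
          ∑ j : Fin k, if j.1 + 1 ≤ n then
            lam j t * ngcpPmf k (fun j' => ∫ s in (0:ℝ)..t, lam j' s) (n - (j.1 + 1))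
          else 0) t)
    ∧ ngcpPmf k (fun j => ∫ s in (0:ℝ)..(0:ℝ), lam j s) 0 = 1
    ∧ ∀ n : ℕ, 1 ≤ n → ngcpPmf k (fun j => ∫ s in (0:ℝ)..(0:ℝ), lam j s) n = 0 := by
  have h0 : (fun j : Fin k => ∫ s in (0:ℝ)..(0:ℝ), lam j s) = fun _ => (0:ℝ) :=
    funext fun j => intervalIntegral.integral_same
  refine ⟨?_, ?_, ?_⟩
  · intro n t
    exact deriv_aux k n (fun j t => ∫ s in (0:ℝ)..t, lam j s) lam t fun j =>
      intervalIntegral.integral_hasDerivAt_right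
        ((hcont j).intervalIntegrable _ _)
        ((hcont j).stronglyMeasurableAtFilter _ _)
        (hcont j).continuousAt
  · rw [h0, ngcpPmf_eq]
    have hOm : Om k 0 = {fun _ => 0} := by
      ext x
      rw [mem_Om, Finset.mem_singleton, funext_iff]
      constructor
      · intro h j
        have h2 := Finset.sum_eq_zero_iff.mp h j (Finset.mem_univ j)
        simpa using h2
      · intro h
        exact Finset.sum_eq_zero fun j _ => by rw [h j, mul_zero]
    rw [hOm, Finset.sum_singleton]
    simp
  · intro n hn
    rw [h0, ngcpPmf_eq]
    refine Finset.sum_eq_zero fun x hx => ?_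
    have hsum := mem_Om.mp hx
    have hex : ∃ i, x i ≠ 0 := by
      by_contra h
      push_neg at h
      rw [Finset.sum_eq_zero (fun j _ => by rw [h j, mul_zero])] at hsum
      omega
    obtain ⟨i, hi⟩ := hex
    rw [Finset.prod_eq_zero (Finset.mem_univ i) (by rw [zero_pow hi]; simp), zero_mul]
end

section
/- Let $K(u,y)$ satisfy the integro-differential equation $\frac{\partial K(u,y)}{\partial u}=\frac{f(\Lambda)}{c}\big(K(u,y)+W(u)-W(u+y)-\int_0^u K(u-x,y)\,dW(x)\big)$ for $u\ge0$, where $W$ is a probability distribution function on $(0,\infty)$, $c>0$, $f(\Lambda)>0$, and suppose $K(\infty,y)=\lim_{u\to\infty}K(u,y)=0$ with $K(\cdot,y)$ integrable on $(0,\infty)$. Then the ruin quantity at zero initial capital is $K(0,y)=\frac{f(\Lambda)}{c}\int_0^y(1-W(v))\,dv$. -/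
open MeasureTheory

open Set Filter in
/-- Volume of the slice `{u | u < t ∧ t ≤ u + y} ∩ Ioi 0 = Ico (t-y) t ∩ Ioi 0`. -/
lemma ruin_vol_slice₁ (y t : ℝ) :
    volume (Set.Ico (t - y) t ∩ Set.Ioi 0) = ENNReal.ofReal (min t y) := by
  have h1 : Set.Ioo (max (t - y) 0) t ⊆ Set.Ico (t - y) t ∩ Set.Ioi 0 := by
    rintro u ⟨h1, h2⟩
    have ha := lt_of_le_of_lt (le_max_left (t - y) 0) h1
    have hb := lt_of_le_of_lt (le_max_right (t - y) 0) h1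
    exact ⟨⟨ha.le, h2⟩, hb⟩
  have h2 : Set.Ico (t - y) t ∩ Set.Ioi 0 ⊆ Set.Ico (max (t - y) 0) t := by
    rintro u ⟨⟨h1, h2⟩, h3⟩
    exact ⟨max_le h1 h3.le, h2⟩
  have e : t - max (t - y) 0 = min t y := by
    rcases le_total (t - y) 0 with h | h
    · rw [max_eq_right h, min_eq_left (by linarith), sub_zero]
    · rw [max_eq_left h, min_eq_right (by linarith)]; ring
  refine le_antisymm ?_ ?_
  · calc volume (Set.Ico (t - y) t ∩ Set.Ioi 0) ≤ volume (Set.Ico (max (t - y) 0) t) :=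
        measure_mono h2
      _ = ENNReal.ofReal (t - max (t - y) 0) := Real.volume_Ico
      _ = ENNReal.ofReal (min t y) := by rw [e]
  · calc ENNReal.ofReal (min t y) = ENNReal.ofReal (t - max (t - y) 0) := by rw [e]
      _ = volume (Set.Ioo (max (t - y) 0) t) := Real.volume_Ioo.symm
      _ ≤ volume (Set.Ico (t - y) t ∩ Set.Ioi 0) := measure_mono h1

/-- Volume of the slice `Iio t ∩ Ioc 0 y`. -/
lemma ruin_vol_slice₂ (y t : ℝ) :
    volume (Set.Iio t ∩ Set.Ioc 0 y) = ENNReal.ofReal (min t y) := by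
  have h1 : Set.Ioo 0 (min t y) ⊆ Set.Iio t ∩ Set.Ioc 0 y := by
    rintro v ⟨h1, h2⟩
    exact ⟨lt_of_lt_of_le h2 (min_le_left t y), h1, le_of_lt (lt_of_lt_of_le h2 (min_le_right t y))⟩
  have h2 : Set.Iio t ∩ Set.Ioc 0 y ⊆ Set.Ioc 0 (min t y) := by
    rintro v ⟨h1, h2, h3⟩
    exact ⟨h2, le_min h1.le h3⟩
  refine le_antisymm ?_ ?_
  · calc volume (Set.Iio t ∩ Set.Ioc 0 y) ≤ volume (Set.Ioc 0 (min t y)) := measure_mono h2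
      _ = ENNReal.ofReal (min t y) := by rw [Real.volume_Ioc, sub_zero]
  · calc ENNReal.ofReal (min t y)
        = volume (Set.Ioo 0 (min t y)) := by rw [Real.volume_Ioo, sub_zero]
      _ ≤ volume (Set.Iio t ∩ Set.Ioc 0 y) := measure_mono h1

/-- If `K(·,y)` satisfies the integro-differential equation
`∂_u K(u,y) = (f(Λ)/c)(K(u,y) + W(u) - W(u+y) - ∫₀ᵘ K(u-x,y) dW(x))` for `u ≥ 0`, where `W` is
a probability distribution function on `(0,∞)`, `K(∞,y) = 0` and `K(·,y)` is integrable on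
`(0,∞)`, then `K(0,y) = (f(Λ)/c) ∫₀ʸ (1 - W(v)) dv`.  Here `F = f(Λ) > 0` and `c > 0`. -/
theorem ruin_zero_capital (c F y : ℝ) (hc : 0 < c) (hF : 0 < F) (hy : 0 ≤ y)
    (W : StieltjesFunction ℝ) (hW0 : ∀ x : ℝ, x ≤ 0 → W x = 0)
    (hW1 : ∀ x : ℝ, W x ≤ 1) (hWtop : Filter.Tendsto W Filter.atTop (nhds 1))
    (K : ℝ → ℝ → ℝ)
    (hode : ∀ u : ℝ, 0 ≤ u → HasDerivAt (fun v => K v y)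
      (F / c * (K u y + W u - W (u + y) -
        ∫ x in Set.Ioc (0 : ℝ) u, K (u - x) y ∂W.measure)) u)
    (hlim : Filter.Tendsto (fun u => K u y) Filter.atTop (nhds 0))
    (hint : IntegrableOn (fun u => K u y) (Set.Ioi (0 : ℝ))) :
    K 0 y = F / c * ∫ v in Set.Ioc (0 : ℝ) y, (1 - W v) := by
  classical
  set μ := W.measure with hμdef
  have hWbot : Filter.Tendsto W Filter.atBot (nhds 0) := by
    have h : ∀ᶠ x in Filter.atBot, (0 : ℝ) = W x := by
      filter_upwards [Filter.eventually_le_atBot (0 : ℝ)] with x hx using (hW0 x hx).symm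
    exact Filter.Tendsto.congr' h tendsto_const_nhds
  haveI hprob : IsProbabilityMeasure μ := W.isProbabilityMeasure hWbot hWtop
  have hWnn : ∀ v : ℝ, 0 ≤ W v := by
    intro v
    rcases le_or_gt v 0 with h | h
    · rw [hW0 v h]
    · rw [← hW0 0 le_rfl]; exact W.mono h.le
  have hWmeas : Measurable W := W.mono.measurable
  have hμIic : μ (Set.Iic 0) = 0 := by
    rw [hμdef, W.measure_Iic hWbot, hW0 0 le_rfl, sub_zero, ENNReal.ofReal_zero]
  have hμIoi : ∀ v : ℝ, μ (Set.Ioi v) = ENNReal.ofReal (1 - W v) := by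
    intro v
    have h : μ (Set.Ioi v) = μ Set.univ - μ (Set.Iic v) := by
      rw [← Set.compl_Iic]
      exact measure_compl measurableSet_Iic (measure_ne_top _ _)
    rw [h, hμdef, W.measure_Iic hWbot, measure_univ, sub_zero,
      ← ENNReal.ofReal_one, ← ENNReal.ofReal_sub _ (hWnn v)]
  -- continuous extension of `K · y` to all of `ℝ`
  set Kc : ℝ → ℝ := fun t => K (max t 0) y with hKcdef
  have hKcont : Continuous Kc := by
    rw [continuous_iff_continuousAt]
    intro t
    have h1 : ContinuousAt (fun v => K v y) (max t 0) := (hode _ (le_max_right t 0)).continuousAt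
    have h2 : ContinuousAt (fun t : ℝ => max t 0) t :=
      (continuous_id.max continuous_const).continuousAt
    exact ContinuousAt.comp (x := t) h1 h2
  have hKc_eq : ∀ t : ℝ, 0 ≤ t → Kc t = K t y := by
    intro t ht
    simp only [hKcdef, max_eq_left ht]
  have hKcint : IntegrableOn Kc (Set.Ioi (0 : ℝ)) := by
    refine hint.congr_fun (fun t ht => ?_) measurableSet_Ioi
    exact (hKc_eq t (le_of_lt ht)).symm
  -- Lemma A : layer-cake computation for the `W`-difference term
  have hWsub_nn : ∀ u : ℝ, 0 ≤ W (u + y) - W u :=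
    fun u => sub_nonneg.2 (W.mono (le_add_of_nonneg_right hy))
  have hA1 : ∀ u : ℝ, ENNReal.ofReal (W (u + y) - W u) = μ (Set.Ioc u (u + y)) :=
    fun u => (W.measure_Ioc u (u + y)).symm
  have hSAmeas : MeasurableSet {q : ℝ × ℝ | q.1 < q.2 ∧ q.2 ≤ q.1 + y} :=
    (measurableSet_lt measurable_fst measurable_snd).inter
      (measurableSet_le measurable_snd (measurable_fst.add_const y))
  have hL1 : ∫⁻ u in Set.Ioi (0 : ℝ), ENNReal.ofReal (W (u + y) - W u)
      = ∫⁻ t, ENNReal.ofReal (min t y) ∂μ := by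
    have e1 : ∀ u : ℝ, ENNReal.ofReal (W (u + y) - W u)
        = ∫⁻ t, Set.indicator {q : ℝ × ℝ | q.1 < q.2 ∧ q.2 ≤ q.1 + y}
            (1 : ℝ × ℝ → ENNReal) (u, t) ∂μ := by
      intro u
      rw [hA1 u, ← lintegral_indicator_one measurableSet_Ioc]
      refine lintegral_congr fun t => ?_
      simp only [Set.indicator_apply, Set.mem_setOf_eq, Set.mem_Ioc, Pi.one_apply]
    calc ∫⁻ u in Set.Ioi (0 : ℝ), ENNReal.ofReal (W (u + y) - W u)
        = ∫⁻ u in Set.Ioi (0 : ℝ), ∫⁻ t, Set.indicator {q : ℝ × ℝ | q.1 < q.2 ∧ q.2 ≤ q.1 + y}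
            (1 : ℝ × ℝ → ENNReal) (u, t) ∂μ := lintegral_congr fun u => e1 u
      _ = ∫⁻ t, ∫⁻ u in Set.Ioi (0 : ℝ), Set.indicator {q : ℝ × ℝ | q.1 < q.2 ∧ q.2 ≤ q.1 + y}
            (1 : ℝ × ℝ → ENNReal) (u, t) ∂volume ∂μ :=
          lintegral_lintegral_swap ((measurable_one.indicator hSAmeas).aemeasurable)
      _ = ∫⁻ t, ENNReal.ofReal (min t y) ∂μ := by
          refine lintegral_congr fun t => ?_
          have e2 : (fun u : ℝ => Set.indicator {q : ℝ × ℝ | q.1 < q.2 ∧ q.2 ≤ q.1 + y}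
              (1 : ℝ × ℝ → ENNReal) (u, t)) = (Set.Ico (t - y) t).indicator 1 := by
            funext u
            simp only [Set.indicator_apply, Set.mem_setOf_eq, Set.mem_Ico, Pi.one_apply]
            exact if_congr ⟨fun h => ⟨by linarith [h.2], h.1⟩,
              fun h => ⟨h.2, by linarith [h.1]⟩⟩ rfl rfl
          rw [e2, lintegral_indicator_one measurableSet_Ico,
            Measure.restrict_apply measurableSet_Ico, ruin_vol_slice₁ y t]
  have hSBmeas : MeasurableSet {q : ℝ × ℝ | q.1 < q.2} :=
    measurableSet_lt measurable_fst measurable_snd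
  have hL2 : ∫⁻ v in Set.Ioc (0 : ℝ) y, ENNReal.ofReal (1 - W v)
      = ∫⁻ t, ENNReal.ofReal (min t y) ∂μ := by
    have e1 : ∀ v : ℝ, ENNReal.ofReal (1 - W v)
        = ∫⁻ t, Set.indicator {q : ℝ × ℝ | q.1 < q.2} (1 : ℝ × ℝ → ENNReal) (v, t) ∂μ := by
      intro v
      rw [← hμIoi v, ← lintegral_indicator_one measurableSet_Ioi]
      refine lintegral_congr fun t => ?_
      simp only [Set.indicator_apply, Set.mem_setOf_eq, Set.mem_Ioi, Pi.one_apply]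
    calc ∫⁻ v in Set.Ioc (0 : ℝ) y, ENNReal.ofReal (1 - W v)
        = ∫⁻ v in Set.Ioc (0 : ℝ) y, ∫⁻ t, Set.indicator {q : ℝ × ℝ | q.1 < q.2}
            (1 : ℝ × ℝ → ENNReal) (v, t) ∂μ := lintegral_congr fun v => e1 v
      _ = ∫⁻ t, ∫⁻ v in Set.Ioc (0 : ℝ) y, Set.indicator {q : ℝ × ℝ | q.1 < q.2}
            (1 : ℝ × ℝ → ENNReal) (v, t) ∂volume ∂μ :=
          lintegral_lintegral_swap ((measurable_one.indicator hSBmeas).aemeasurable)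
      _ = ∫⁻ t, ENNReal.ofReal (min t y) ∂μ := by
          refine lintegral_congr fun t => ?_
          have e2 : (fun v : ℝ => Set.indicator {q : ℝ × ℝ | q.1 < q.2}
              (1 : ℝ × ℝ → ENNReal) (v, t)) = (Set.Iio t).indicator 1 := by
            funext v
            simp only [Set.indicator_apply, Set.mem_setOf_eq, Set.mem_Iio, Pi.one_apply]
          rw [e2, lintegral_indicator_one measurableSet_Iio,
            Measure.restrict_apply measurableSet_Iio, ruin_vol_slice₂ y t]
  have hfin : ∫⁻ t, ENNReal.ofReal (min t y) ∂μ < ⊤ := by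
    refine lt_of_le_of_lt (le_trans (lintegral_mono fun t =>
      ENNReal.ofReal_le_ofReal (min_le_right t y)) ?_)
      (ENNReal.ofReal_lt_top : ENNReal.ofReal y < ⊤)
    rw [lintegral_const, measure_univ, mul_one]
  have hWint : IntegrableOn (fun u => W (u + y) - W u) (Set.Ioi (0 : ℝ)) := by
    constructor
    · exact ((hWmeas.comp (measurable_id.add_const y)).sub hWmeas).aestronglyMeasurable
    · rw [hasFiniteIntegral_iff_ofReal (Filter.Eventually.of_forall hWsub_nn)]
      rw [hL1]; exact hfin
  have hAval : ∫ u in Set.Ioi (0 : ℝ), (W (u + y) - W u)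
      = ∫ v in Set.Ioc (0 : ℝ) y, (1 - W v) := by
    rw [integral_eq_lintegral_of_nonneg_ae (Filter.Eventually.of_forall hWsub_nn)
        ((hWmeas.comp (measurable_id.add_const y)).sub hWmeas).aestronglyMeasurable,
      integral_eq_lintegral_of_nonneg_ae
        (Filter.Eventually.of_forall fun v => sub_nonneg.2 (hW1 v))
        ((measurable_const.sub hWmeas).aestronglyMeasurable),
      hL1, hL2]
  -- Lemma B : Fubini for the convolution term
  set G : ℝ × ℝ → ℝ :=
    Set.indicator {q : ℝ × ℝ | 0 < q.2 ∧ q.2 ≤ q.1} (fun q => Kc (q.1 - q.2)) with hGdef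
  have hSmeas : MeasurableSet {q : ℝ × ℝ | 0 < q.2 ∧ q.2 ≤ q.1} :=
    (measurableSet_lt measurable_const measurable_snd).inter
      (measurableSet_le measurable_snd measurable_fst)
  have hGmeas : Measurable G :=
    ((hKcont.comp (continuous_fst.sub continuous_snd)).measurable).indicator hSmeas
  have hrestr : volume.restrict (Set.Ici (0:ℝ)) = volume.restrict (Set.Ioi (0:ℝ)) :=
    Measure.restrict_congr_set (MeasureTheory.Ioi_ae_eq_Ici).symm
  set C := ∫⁻ w in Set.Ici (0:ℝ), ENNReal.ofReal ‖Kc w‖ with hCdef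
  have hC : C < ⊤ := by
    rw [hCdef, hrestr]
    exact (hasFiniteIntegral_iff_norm Kc).1 hKcint.2
  have hGnorm : ∀ p : ℝ × ℝ, ENNReal.ofReal ‖G p‖
      = Set.indicator {q : ℝ × ℝ | 0 < q.2 ∧ q.2 ≤ q.1}
        (fun q => ENNReal.ofReal ‖Kc (q.1 - q.2)‖) p := by
    intro p
    by_cases h : p ∈ {q : ℝ × ℝ | 0 < q.2 ∧ q.2 ≤ q.1}
    · rw [hGdef, Set.indicator_of_mem h, Set.indicator_of_mem h]
    · rw [hGdef, Set.indicator_of_notMem h, Set.indicator_of_notMem h, norm_zero,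
        ENNReal.ofReal_zero]
  have hinner_le : ∀ x : ℝ, ∫⁻ u in Set.Ioi (0:ℝ), ENNReal.ofReal ‖G (u, x)‖ ∂volume ≤ C := by
    intro x
    by_cases hx : 0 < x
    · have e1 : (fun u : ℝ => ENNReal.ofReal ‖G (u, x)‖)
          = fun u => (Set.Ici (0:ℝ)).indicator (fun w => ENNReal.ofReal ‖Kc w‖) (u - x) := by
        funext u
        rw [hGnorm (u, x)]
        by_cases h : x ≤ u
        · rw [Set.indicator_of_mem (show ((u, x) : ℝ × ℝ) ∈ {q : ℝ × ℝ | 0 < q.2 ∧ q.2 ≤ q.1} from ⟨hx, h⟩),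
            Set.indicator_of_mem (Set.mem_Ici.2 (sub_nonneg.2 h))]
        · rw [Set.indicator_of_notMem (fun hh => h hh.2),
            Set.indicator_of_notMem (fun hh => h (sub_nonneg.1 (Set.mem_Ici.1 hh)))]
      rw [e1]
      calc ∫⁻ u in Set.Ioi (0:ℝ),
            (Set.Ici (0:ℝ)).indicator (fun w => ENNReal.ofReal ‖Kc w‖) (u - x) ∂volume
          ≤ ∫⁻ u, (Set.Ici (0:ℝ)).indicator (fun w => ENNReal.ofReal ‖Kc w‖) (u - x) ∂volume :=
            setLIntegral_le_lintegral _ _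
        _ = ∫⁻ u, (Set.Ici (0:ℝ)).indicator (fun w => ENNReal.ofReal ‖Kc w‖) u ∂volume :=
            lintegral_sub_right_eq_self _ x
        _ = C := by rw [lintegral_indicator measurableSet_Ici]
    · have e0 : ∀ u : ℝ, ENNReal.ofReal ‖G (u, x)‖ = 0 := by
        intro u
        rw [hGnorm (u, x), Set.indicator_of_notMem (fun hh => hx hh.1)]
      refine le_trans (le_of_eq ?_) (zero_le : 0 ≤ C)
      simp only [e0, lintegral_const, zero_mul]
  have hfiG : HasFiniteIntegral G ((volume.restrict (Set.Ioi (0:ℝ))).prod μ) := by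
    rw [hasFiniteIntegral_iff_norm]
    have hle : ∫⁻ p, ENNReal.ofReal ‖G p‖ ∂((volume.restrict (Set.Ioi (0:ℝ))).prod μ) ≤ C := by
      calc ∫⁻ p, ENNReal.ofReal ‖G p‖ ∂((volume.restrict (Set.Ioi (0:ℝ))).prod μ)
          = ∫⁻ u in Set.Ioi (0:ℝ), ∫⁻ x, ENNReal.ofReal ‖G (u, x)‖ ∂μ :=
            lintegral_prod _ ((hGmeas.norm.ennreal_ofReal).aemeasurable)
        _ = ∫⁻ x, ∫⁻ u in Set.Ioi (0:ℝ), ENNReal.ofReal ‖G (u, x)‖ ∂volume ∂μ :=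
            lintegral_lintegral_swap ((hGmeas.norm.ennreal_ofReal).aemeasurable)
        _ ≤ ∫⁻ _, C ∂μ := lintegral_mono fun x => hinner_le x
        _ = C := by rw [lintegral_const, measure_univ, mul_one]
    exact lt_of_le_of_lt hle hC
  have hGint : Integrable G ((volume.restrict (Set.Ioi (0:ℝ))).prod μ) :=
    ⟨hGmeas.aestronglyMeasurable, hfiG⟩
  set convF : ℝ → ℝ := fun u => ∫ x in Set.Ioc (0:ℝ) u, Kc (u - x) ∂μ with hconvFdef
  have hGslice : ∀ u : ℝ, (fun x => G (u, x))
      = (Set.Ioc (0:ℝ) u).indicator (fun x => Kc (u - x)) := by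
    intro u; funext x
    by_cases h : 0 < x ∧ x ≤ u
    · rw [hGdef, Set.indicator_of_mem (show ((u, x) : ℝ × ℝ) ∈ {q : ℝ × ℝ | 0 < q.2 ∧ q.2 ≤ q.1} from h),
        Set.indicator_of_mem (Set.mem_Ioc.2 h)]
    · rw [hGdef, Set.indicator_of_notMem (show ((u, x) : ℝ × ℝ) ∉ {q : ℝ × ℝ | 0 < q.2 ∧ q.2 ≤ q.1} from h),
        Set.indicator_of_notMem (fun hh => h (Set.mem_Ioc.1 hh))]
  have hmarg : ∀ u : ℝ, (∫ x, G (u, x) ∂μ) = convF u := by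
    intro u
    rw [hGslice u, integral_indicator measurableSet_Ioc]
  have hconvint : IntegrableOn convF (Set.Ioi (0:ℝ)) :=
    (hGint.integral_prod_left).congr (Filter.Eventually.of_forall hmarg)
  have hinner_val : ∀ x : ℝ, 0 < x →
      (∫ u in Set.Ioi (0:ℝ), G (u, x)) = ∫ u in Set.Ioi (0:ℝ), Kc u := by
    intro x hx
    have e1 : (fun u : ℝ => G (u, x)) = fun u => (Set.Ici (0:ℝ)).indicator Kc (u - x) := by
      funext u
      by_cases h : x ≤ u
      · rw [hGdef, Set.indicator_of_mem (show ((u, x) : ℝ × ℝ) ∈ {q : ℝ × ℝ | 0 < q.2 ∧ q.2 ≤ q.1} from ⟨hx, h⟩),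
          Set.indicator_of_mem (Set.mem_Ici.2 (sub_nonneg.2 h))]
      · rw [hGdef, Set.indicator_of_notMem (fun hh => h hh.2),
          Set.indicator_of_notMem (fun hh => h (sub_nonneg.1 (Set.mem_Ici.1 hh)))]
    calc (∫ u in Set.Ioi (0:ℝ), G (u, x))
        = ∫ u in Set.Ioi (0:ℝ), (Set.Ici (0:ℝ)).indicator Kc (u - x) := by rw [e1]
      _ = ∫ u, (Set.Ici (0:ℝ)).indicator Kc (u - x) := by
          refine setIntegral_eq_integral_of_forall_compl_eq_zero fun u hu => ?_
          have hu0 : u ≤ 0 := by simpa using hu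
          exact Set.indicator_of_notMem (fun hh => by
            have := sub_nonneg.1 (Set.mem_Ici.1 hh); linarith) _
      _ = ∫ u, (Set.Ici (0:ℝ)).indicator Kc u := integral_sub_right_eq_self _ x
      _ = ∫ u in Set.Ici (0:ℝ), Kc u := integral_indicator measurableSet_Ici
      _ = ∫ u in Set.Ioi (0:ℝ), Kc u := integral_Ici_eq_integral_Ioi
  have hBval : ∫ u in Set.Ioi (0:ℝ), convF u = ∫ u in Set.Ioi (0:ℝ), Kc u := by
    have hswap := integral_integral_swap (f := fun u x => G (u, x)) hGint
    have hae : (fun x => ∫ u in Set.Ioi (0:ℝ), G (u, x))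
        =ᵐ[μ] fun _ => ∫ u in Set.Ioi (0:ℝ), Kc u := by
      have h0 : ∀ᵐ x ∂μ, 0 < x := by
        rw [ae_iff]
        have he : {x : ℝ | ¬ 0 < x} = Set.Iic 0 := by ext x; simp [not_lt]
        rw [he]; exact hμIic
      filter_upwards [h0] with x hx using hinner_val x hx
    calc ∫ u in Set.Ioi (0:ℝ), convF u
        = ∫ u in Set.Ioi (0:ℝ), ∫ x, G (u, x) ∂μ :=
          integral_congr_ae (Filter.Eventually.of_forall fun u => (hmarg u).symm)
      _ = ∫ x, (∫ u in Set.Ioi (0:ℝ), G (u, x)) ∂μ := by exact hswap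
      _ = ∫ _, (∫ u in Set.Ioi (0:ℝ), Kc u) ∂μ := by exact integral_congr_ae hae
      _ = ∫ u in Set.Ioi (0:ℝ), Kc u := by
          rw [integral_const, probReal_univ, one_smul]
  -- the derivative function and FTC on `(0, ∞)`
  set g : ℝ → ℝ := fun u => F / c * (Kc u + W u - W (u + y) - convF u) with hgdef
  have hg_deriv : ∀ u ∈ Set.Ici (0:ℝ), HasDerivAt (fun v => K v y) (g u) u := by
    intro u hu
    have hu' : (0:ℝ) ≤ u := hu
    have hce : (∫ x in Set.Ioc (0:ℝ) u, K (u - x) y ∂μ) = convF u := by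
      rw [hconvFdef]
      exact setIntegral_congr_fun measurableSet_Ioc
        (fun x hx => (hKc_eq (u - x) (sub_nonneg.2 hx.2)).symm)
    have he : g u = F / c * (K u y + W u - W (u + y)
        - ∫ x in Set.Ioc (0:ℝ) u, K (u - x) y ∂μ) := by
      rw [hgdef]
      simp only
      rw [hKc_eq u hu', hce]
    rw [he]
    exact hode u hu'
  have hgint : IntegrableOn g (Set.Ioi (0:ℝ)) := by
    have h1 : IntegrableOn (fun u => ((Kc u - convF u) - (W (u + y) - W u)))
        (Set.Ioi (0:ℝ)) := (hKcint.sub hconvint).sub hWint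
    have h2 := h1.const_mul (F / c)
    refine h2.congr (Filter.Eventually.of_forall fun u => ?_)
    rw [hgdef]
    ring
  have hFTC := integral_Ioi_of_hasDerivAt_of_tendsto' hg_deriv hgint hlim
  have hsplit : ∫ u in Set.Ioi (0:ℝ), g u
      = F / c * ((∫ u in Set.Ioi (0:ℝ), (Kc u - convF u))
          - ∫ u in Set.Ioi (0:ℝ), (W (u + y) - W u)) := by
    have hsub1 : IntegrableOn (fun u => Kc u - convF u) (Set.Ioi (0:ℝ)) :=
      hKcint.sub hconvint
    rw [← integral_sub hsub1 hWint, ← integral_const_mul]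
    exact integral_congr_ae (Filter.Eventually.of_forall fun u => by rw [hgdef]; ring)
  have hzero : ∫ u in Set.Ioi (0:ℝ), (Kc u - convF u) = 0 := by
    rw [integral_sub hKcint hconvint, hBval, sub_self]
  rw [hsplit, hzero, hAval, zero_sub, zero_sub, mul_neg] at hFTC
  linarith [hFTC]
end

section
/- For $0<u<1$, $0<\alpha,\beta<1$, $\lambda_j>0$, $\Lambda=\sum_{j=1}^k\lambda_j$, let $c=1-\frac{1}{\Lambda}\sum_{j=1}^k\lambda_j u^j\in(0,1)$. Then $E_{\alpha,1}\big(-t^\alpha\Lambda^\beta c^\beta\big) = \sum_{r=0}^\infty (1-c^\beta)^r \sum_{m=r}^\infty(-1)^{m-r}\binom{m}{r}\frac{(t^\alpha\Lambda^\beta)^m}{\Gamma(m\alpha+1)}$; equivalently, the pgf of the GSTFCP equals $\Pr\{\min_{0\le r\le N_\alpha(t,\Lambda^\beta)}X_r^{1/\beta}\ge c\}$ where $X_i$ are iid uniform on $[0,1]$ and $N_\alpha(t,\Lambda^\beta)$ is an independent time fractional Poisson process with pmf $\Pr\{N_\alpha(t,\mu)=r\}=\sum_{m\ge r}(-1)^{m-r}\binom{m}{r}\frac{(\mu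 t^\alpha)^m}{\Gamma(m\alpha+1)}$. -/
open scoped BigOperators

lemma choose_le_two_pow' (n k : ℕ) : n.choose k ≤ 2 ^ n := by
  rcases le_or_gt k n with h | h
  · calc n.choose k ≤ ∑ m ∈ Finset.range (n+1), n.choose m :=
        Finset.single_le_sum (fun _ _ => Nat.zero_le _) (Finset.mem_range.2 (Nat.lt_succ_of_le h))
    _ = 2 ^ n := Nat.sum_range_choose n
  · simp [Nat.choose_eq_zero_of_lt h]

lemma gamma_lower (α : ℝ) (hα : 0 < α) (hα1 : α ≤ 1) (m : ℕ) :
    ((m.factorial : ℝ)) ^ α / 4 ^ m ≤ Real.Gamma ((m : ℝ) * α + 1) := by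
  rcases Nat.eq_zero_or_pos m with rfl | hm
  · simp [Real.Gamma_one]
  have h2α : (0:ℝ) < 2 - α := by linarith
  set a : ℝ := (m : ℝ) * α + 1 with ha
  set b : ℝ := 2 * (m : ℝ) + 1 with hb
  have hmpos : (0:ℝ) < m := by exact_mod_cast hm
  have haI : a ∈ Set.Ioi (0:ℝ) := by rw [Set.mem_Ioi, ha]; positivity
  have hbI : b ∈ Set.Ioi (0:ℝ) := by rw [Set.mem_Ioi, hb]; positivity
  have hw1 : (0:ℝ) ≤ 1 / (2 - α) := by positivity
  have hw2 : (0:ℝ) ≤ (1 - α) / (2 - α) := by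
    apply div_nonneg <;> linarith
  have hw : 1 / (2 - α) + (1 - α) / (2 - α) = 1 := by field_simp; ring
  have hcomb : (1 / (2 - α)) • a + ((1 - α) / (2 - α)) • b = (m : ℝ) + 1 := by
    simp only [smul_eq_mul, ha, hb]
    field_simp
    try ring
  have hconv := Real.convexOn_log_Gamma.2 haI hbI hw1 hw2 hw
  rw [hcomb] at hconv
  simp only [Function.comp, smul_eq_mul] at hconv
  have hGm : Real.Gamma ((m : ℝ) + 1) = m.factorial := Real.Gamma_nat_eq_factorial m
  have hGb : Real.Gamma b = (2 * m).factorial := by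
    rw [hb, show 2 * (m:ℝ) + 1 = ((2 * m : ℕ) : ℝ) + 1 by push_cast; ring]
    exact Real.Gamma_nat_eq_factorial (2 * m)
  rw [hGm, hGb] at hconv
  have key : (2 - α) * Real.log (m.factorial) ≤
      Real.log (Real.Gamma a) + (1 - α) * Real.log ((2 * m).factorial) := by
    have h := mul_le_mul_of_nonneg_left hconv h2α.le
    calc (2 - α) * Real.log (m.factorial)
        ≤ (2 - α) * (1 / (2 - α) * Real.log (Real.Gamma a)
          + (1 - α) / (2 - α) * Real.log ((2*m).factorial)) := h
      _ = Real.log (Real.Gamma a) + (1 - α) * Real.log ((2 * m).factorial) := by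
          field_simp
          try ring
  have hGa : 0 < Real.Gamma a := Real.Gamma_pos_of_pos haI
  have hfm : (0:ℝ) < m.factorial := by exact_mod_cast m.factorial_pos
  have hf2m : (0:ℝ) < (2*m).factorial := by exact_mod_cast (2*m).factorial_pos
  have expkey : ((m.factorial : ℝ)) ^ (2 - α) ≤
      Real.Gamma a * ((2*m).factorial : ℝ) ^ (1 - α) := by
    have h := Real.exp_le_exp.2 key
    rw [Real.exp_add, Real.exp_log hGa] at h
    calc ((m.factorial : ℝ)) ^ (2 - α)
        = Real.exp ((2 - α) * Real.log (m.factorial)) := by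
          rw [Real.rpow_def_of_pos hfm, mul_comm]
      _ ≤ Real.Gamma a * Real.exp ((1 - α) * Real.log ((2*m).factorial)) := h
      _ = Real.Gamma a * ((2*m).factorial : ℝ) ^ (1 - α) := by
          rw [Real.rpow_def_of_pos hf2m, mul_comm (Real.log _)]
  have hcb : ((2*m).factorial : ℝ) ≤ ((m.factorial : ℝ))^2 * 4 ^ m := by
    have h0 := Nat.choose_mul_factorial_mul_factorial (show m ≤ 2*m by omega)
    rw [show 2*m - m = m by omega] at h0
    have h1 : (2*m).factorial = (2*m).choose m * (m.factorial * m.factorial) := by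
      rw [← h0]; ring
    have h2 : (2*m).choose m ≤ 2 ^ (2*m) := choose_le_two_pow' (2*m) m
    calc ((2*m).factorial : ℝ) = ((2*m).choose m : ℝ) * (m.factorial * m.factorial) := by
          rw [h1]; push_cast; ring
      _ ≤ (2:ℝ) ^ (2*m) * (m.factorial * m.factorial) := by
          apply mul_le_mul_of_nonneg_right _ (by positivity)
          exact_mod_cast h2
      _ = ((m.factorial : ℝ))^2 * 4 ^ m := by rw [pow_mul]; ring
  have h4 : ((2*m).factorial : ℝ) ^ (1 - α) ≤ ((m.factorial : ℝ))^(2 - 2*α) * 4 ^ m := by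
    have h1α : (0:ℝ) ≤ 1 - α := by linarith
    calc ((2*m).factorial : ℝ) ^ (1 - α)
        ≤ (((m.factorial : ℝ))^2 * 4 ^ m) ^ (1 - α) :=
          Real.rpow_le_rpow hf2m.le hcb h1α
      _ = (((m.factorial : ℝ))^2) ^ (1-α) * ((4:ℝ) ^ m) ^ (1 - α) :=
          Real.mul_rpow (by positivity) (by positivity)
      _ ≤ ((m.factorial : ℝ))^(2 - 2*α) * 4 ^ m := by
          apply mul_le_mul
          · apply le_of_eq
            rw [← Real.rpow_natCast (m.factorial : ℝ) 2, ← Real.rpow_mul hfm.le]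
            congr 1; push_cast; ring
          · have h5 : ((4:ℝ)^m)^(1-α) ≤ ((4:ℝ)^m)^(1:ℝ) :=
              Real.rpow_le_rpow_of_exponent_le (one_le_pow₀ (by norm_num)) (by linarith)
            simpa using h5
          · positivity
          · positivity
  rw [div_le_iff₀ (by positivity : (0:ℝ) < 4 ^ m)]
  have hcpos : (0:ℝ) < (m.factorial:ℝ) ^ (2-2*α) := Real.rpow_pos_of_pos hfm _
  rw [← mul_le_mul_iff_of_pos_right hcpos]
  calc (m.factorial:ℝ)^α * (m.factorial:ℝ)^(2-2*α)
      = (m.factorial:ℝ)^(2-α) := by rw [← Real.rpow_add hfm]; ring_nf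
    _ ≤ Real.Gamma a * ((2*m).factorial : ℝ) ^ (1 - α) := expkey
    _ ≤ Real.Gamma a * (((m.factorial : ℝ))^(2-2*α) * 4 ^ m) :=
        mul_le_mul_of_nonneg_left h4 hGa.le
    _ = Real.Gamma a * 4 ^ m * (m.factorial:ℝ)^(2-2*α) := by ring

lemma summable_pow_div_fact_rpow (α y : ℝ) (hα : 0 < α) (hy : 0 ≤ y) :
    Summable fun m : ℕ => y ^ m / ((m.factorial : ℝ)) ^ α := by
  apply summable_of_ratio_norm_eventually_le (r := 1/2) (by norm_num)
  have htend : Filter.Tendsto (fun n : ℕ => ((n:ℝ) + 1) ^ α) Filter.atTop Filter.atTop := by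
    apply (tendsto_rpow_atTop hα).comp
    exact Filter.tendsto_atTop_add_const_right _ 1 tendsto_natCast_atTop_atTop
  filter_upwards [htend.eventually_ge_atTop (2 * y)] with n hn
  have hfn : (0:ℝ) < (n.factorial : ℝ) := by exact_mod_cast n.factorial_pos
  have hfn1 : (0:ℝ) < ((n+1).factorial : ℝ) := by exact_mod_cast (n+1).factorial_pos
  have hpow : (0:ℝ) < ((n:ℝ)+1) ^ α := Real.rpow_pos_of_pos (by positivity) _
  rw [Real.norm_eq_abs, Real.norm_eq_abs, abs_of_nonneg (by positivity),
    abs_of_nonneg (by positivity)]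
  have hfact : (((n+1).factorial : ℝ)) ^ α = ((n:ℝ)+1) ^ α * ((n.factorial : ℝ)) ^ α := by
    rw [show ((n+1).factorial : ℝ) = ((n:ℝ)+1) * (n.factorial : ℝ) by
      rw [Nat.factorial_succ]; push_cast; ring]
    exact Real.mul_rpow (by positivity) hfn.le
  have heq : y^(n+1)/(((n+1).factorial:ℝ))^α
      = (y / ((n:ℝ)+1)^α) * (y^n/((n.factorial:ℝ))^α) := by
    rw [hfact, pow_succ]; field_simp
  rw [heq]
  have hhalf : y / ((n:ℝ)+1)^α ≤ 1/2 := by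
    rw [div_le_iff₀ hpow]; linarith
  exact mul_le_mul_of_nonneg_right hhalf (by positivity)

/-- Mittag-Leffler function `E_{α,1}(x) = ∑ xᵐ/Γ(mα+1)`. -/
noncomputable def mlFn (α x : ℝ) : ℝ := ∑' m : ℕ, x ^ m / Real.Gamma ((m : ℝ) * α + 1)

set_option maxHeartbeats 1000000 in
lemma rearrange (α s μ : ℝ) (hα : 0 < α) (hα1 : α < 1) (hs0 : 0 ≤ s) (hs1 : s ≤ 1)
    (hμ : 0 ≤ μ) :
    mlFn α (μ * (s - 1)) =
      ∑' r : ℕ, s ^ r * ∑' i : ℕ, (-1:ℝ) ^ i * (((r + i).choose r : ℕ) : ℝ) * μ ^ (r + i) /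
        Real.Gamma (((r + i : ℕ) : ℝ) * α + 1) := by
  set g : ℕ × ℕ → ℝ := fun p => s ^ p.1 *
    ((-1:ℝ) ^ p.2 * (((p.1 + p.2).choose p.1 : ℕ) : ℝ) * μ ^ (p.1 + p.2) /
      Real.Gamma (((p.1 + p.2 : ℕ) : ℝ) * α + 1)) with hgdef
  set F : ℕ → ℝ := fun n => (8 * (μ + 1)) ^ n / ((n.factorial : ℝ)) ^ α with hFdef
  have hF : Summable F := summable_pow_div_fact_rpow α _ hα (by positivity)
  have hFnn : ∀ n, 0 ≤ F n := fun n => by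
    apply div_nonneg (by positivity) (Real.rpow_nonneg (by positivity) _)
  have hbound : ∀ p : ℕ × ℕ, ‖g p‖ ≤ F p.1 * F p.2 := by
    rintro ⟨r, i⟩
    set m := r + i with hm
    have hΓ : 0 < Real.Gamma ((m : ℝ) * α + 1) :=
      Real.Gamma_pos_of_pos (by positivity)
    have hfr : (0:ℝ) < (r.factorial : ℝ) := by exact_mod_cast r.factorial_pos
    have hfi : (0:ℝ) < (i.factorial : ℝ) := by exact_mod_cast i.factorial_pos
    have hfm : (0:ℝ) < (m.factorial : ℝ) := by exact_mod_cast m.factorial_pos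
    have habs : ‖g (r, i)‖ = s ^ r * ((m.choose r : ℝ) * μ ^ m) /
        Real.Gamma ((m : ℝ) * α + 1) := by
      simp only [hgdef, Real.norm_eq_abs]
      rw [abs_mul, abs_div, abs_mul, abs_mul, abs_pow, abs_pow, abs_pow, abs_neg, abs_one,
        one_pow, one_mul, abs_of_nonneg hs0, abs_of_nonneg hμ, Nat.abs_cast,
        abs_of_pos hΓ]
      ring
    rw [habs]
    have hglb := gamma_lower α hα hα1.le m
    have hlb : (0:ℝ) < (m.factorial : ℝ) ^ α / 4 ^ m := by positivity
    calc s ^ r * ((m.choose r : ℝ) * μ ^ m) / Real.Gamma ((m : ℝ) * α + 1)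
        ≤ 1 * ((2:ℝ) ^ m * (μ + 1) ^ m) / ((m.factorial : ℝ) ^ α / 4 ^ m) := by
          gcongr
          · exact pow_le_one₀ hs0 hs1
          · exact_mod_cast choose_le_two_pow' m r
          · linarith
      _ = (2:ℝ) ^ m * (μ + 1) ^ m * 4 ^ m / (m.factorial : ℝ) ^ α := by
          rw [one_mul, div_div_eq_mul_div]
      _ ≤ (2:ℝ) ^ m * (μ + 1) ^ m * 4 ^ m /
            ((r.factorial : ℝ) ^ α * (i.factorial : ℝ) ^ α) := by
          gcongr
          rw [← Real.mul_rpow hfr.le hfi.le]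
          apply Real.rpow_le_rpow (by positivity) _ hα.le
          have := Nat.factorial_mul_factorial_dvd_factorial_add r i
          exact_mod_cast Nat.cast_le.mpr (Nat.le_of_dvd m.factorial_pos this)
      _ = F r * F i := by
          simp only [hFdef]
          rw [div_mul_div_comm, ← pow_add, ← hm, mul_pow]
          congr 1
          rw [show (8:ℝ) = 2 * 4 by norm_num, mul_pow]
          ring
  have hg : Summable g :=
    Summable.of_norm_bounded (hF.mul_of_nonneg hF hFnn hFnn) hbound
  have hterm : ∀ n : ℕ, (μ * (s - 1)) ^ n / Real.Gamma ((n : ℝ) * α + 1) =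
      ∑ kl ∈ Finset.HasAntidiagonal.antidiagonal n, g kl := by
    intro n
    rw [Finset.Nat.sum_antidiagonal_eq_sum_range_succ_mk]
    have hcg : ∀ x ∈ Finset.range (n + 1), g (x, n - x) =
        s ^ x * (-1:ℝ) ^ (n - x) * (n.choose x : ℝ) *
          (μ ^ n / Real.Gamma ((n : ℝ) * α + 1)) := by
      intro x hx
      have hxn : x ≤ n := Nat.lt_succ_iff.mp (Finset.mem_range.mp hx)
      have h' : x + (n - x) = n := by omega
      simp only [hgdef, h']
      ring
    rw [Finset.sum_congr rfl hcg, ← Finset.sum_mul, ← add_pow,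
      show s + (-1:ℝ) = s - 1 by ring, mul_pow]
    ring
  have hsig : Summable fun x : Σ n : ℕ, (Finset.HasAntidiagonal.antidiagonal n : Finset (ℕ × ℕ)) =>
      g (x.2 : ℕ × ℕ) :=
    Finset.HasAntidiagonal.sigmaAntidiagonalEquivProd.summable_iff.mpr hg
  calc mlFn α (μ * (s - 1))
      = ∑' n : ℕ, ∑ kl ∈ Finset.HasAntidiagonal.antidiagonal n, g kl := by
        unfold mlFn
        exact tsum_congr hterm
    _ = ∑' n : ℕ, ∑' kl : (Finset.HasAntidiagonal.antidiagonal n : Finset (ℕ × ℕ)), g kl := by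
        refine tsum_congr fun n => ?_
        rw [Finset.tsum_subtype]
    _ = ∑' x : Σ n : ℕ, (Finset.HasAntidiagonal.antidiagonal n : Finset (ℕ × ℕ)), g (x.2 : ℕ × ℕ) :=
        (hsig.tsum_sigma' (fun n => (hasSum_fintype _).summable)).symm
    _ = ∑' p : ℕ × ℕ, g p := Finset.HasAntidiagonal.sigmaAntidiagonalEquivProd.tsum_eq (g ·)
    _ = ∑' r : ℕ, ∑' i : ℕ, g (r, i) := hg.tsum_prod' fun r => hg.prod_factor r
    _ = ∑' r : ℕ, s ^ r * ∑' i : ℕ, (-1:ℝ) ^ i * (((r + i).choose r : ℕ) : ℝ) * μ ^ (r + i) /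
          Real.Gamma (((r + i : ℕ) : ℝ) * α + 1) := by
        refine tsum_congr fun r => ?_
        simp only [hgdef]
        exact tsum_mul_left

/-- With `c = 1 - Λ⁻¹ ∑ λⱼ uʲ ∈ (0,1)`, the pgf of the GSTFCP rearranges as
`E_{α,1}(-t^α Λ^β c^β) = ∑_{r≥0} (1-c^β)^r ∑_{m≥r} (-1)^{m-r} C(m,r) (t^α Λ^β)^m/Γ(mα+1)`,
i.e. it equals `Pr{min_{0≤r≤N_α(t,Λ^β)} X_r^{1/β} ≥ c}` for iid uniform `X_i` and an independent
time fractional Poisson process `N_α` with pmf `∑_{m≥r} (-1)^{m-r} C(m,r)(μt^α)^m/Γ(mα+1)`. -/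
theorem gstfcp_pgf_rearrange (k : ℕ) (lam : Fin k → ℝ) (hlam : ∀ j, 0 < lam j)
    (α β u t : ℝ) (hα : α ∈ Set.Ioo (0 : ℝ) 1) (hβ : β ∈ Set.Ioo (0 : ℝ) 1)
    (hu : u ∈ Set.Ioo (0 : ℝ) 1) (ht : 0 ≤ t)
    (hc : (1 - (∑ j, lam j)⁻¹ * ∑ j, lam j * u ^ (j.1 + 1)) ∈ Set.Ioo (0 : ℝ) 1) :
    mlFn α (-(t ^ α * (∑ j, lam j) ^ β *
        (1 - (∑ j, lam j)⁻¹ * ∑ j, lam j * u ^ (j.1 + 1)) ^ β)) =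
      ∑' r : ℕ, (1 - (1 - (∑ j, lam j)⁻¹ * ∑ j, lam j * u ^ (j.1 + 1)) ^ β) ^ r *
        ∑' i : ℕ, (-1 : ℝ) ^ i * ((r + i).choose r : ℝ) *
          (t ^ α * (∑ j, lam j) ^ β) ^ (r + i) / Real.Gamma (((r + i : ℕ) : ℝ) * α + 1) := by
  obtain ⟨hα0, hα1⟩ := hα
  have hΛ : (0:ℝ) ≤ ∑ j, lam j := Finset.sum_nonneg fun j _ => (hlam j).le
  set c : ℝ := 1 - (∑ j, lam j)⁻¹ * ∑ j, lam j * u ^ (j.1 + 1) with hcdef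
  set μ : ℝ := t ^ α * (∑ j, lam j) ^ β with hμdef
  have hμ0 : 0 ≤ μ := mul_nonneg (Real.rpow_nonneg ht α) (Real.rpow_nonneg hΛ β)
  have hcb0 : 0 < c ^ β := Real.rpow_pos_of_pos hc.1 β
  have hcb1 : c ^ β ≤ 1 := Real.rpow_le_one hc.1.le hc.2.le hβ.1.le
  have key := rearrange α (1 - c ^ β) μ hα0 hα1 (by linarith) (by linarith) hμ0
  have harg : -(μ * c ^ β) = μ * ((1 - c ^ β) - 1) := by ring
  rw [harg]
  exact key
end
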